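/- Let (K_i)_{i∈I} be a filtration of finite simplicial complexes over a totally ordered index set I with K_∞ = ∪_{i∈I} K_i finite, and let μ be an acyclic partial matching on K_∞ that respects the filtration (i.e., h(μ(σ)) = h(σ) whenever μ(σ) is defined, where h(σ) is the smallest i with σ ∈ K_i). Then for every q ≥ 0 there is a family of isomorphisms θ_i^q : H_q(Crit_*(K_i, μ)) → H_q(K_i), induced by the inclusion of chains Crit_q(K_i, μ) ⊆ C_q(K_i), such that for all i < j in I the square with top map f_i^j : H_q(Crit_*(K_i, μ)) → H_q(Crit_*(K_j, μ)) induced by inclusion of subcomplexes, bottom map g_i^j : H_q(K_i) → H_q(K_j) induced by inclusion K_i ⊆ K_j, and vertical maps θ_i^q, θ_j^q, commutes: g_i^j ∘ θ_i^q = θ_j^q ∘ f_i^j. -/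

import Mathlib

set_option maxSynthPendingDepth 2

/-! Simplicial ℤ/2 chains and homology machinery. -/

/-- Chains with `ℤ/2` coefficients, formal sums of finite subsets of `V`. -/
abbrev Ch (V : Type*) := Finset V →₀ ZMod 2

/-- The simplicial boundary operator: a simplex with at least two vertices is sent
to the sum of its codimension-1 faces; vertices are sent to `0`. -/
noncomputable def bdry (V : Type*) [DecidableEq V] : Ch V →ₗ[ZMod 2] Ch V :=
  Finsupp.linearCombination (ZMod 2) fun σ : Finset V =>
    if σ.card ≤ 1 then 0 else ∑ v ∈ σ, Finsupp.single (σ.erase v) (1 : ZMod 2)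

/-- A simplicial complex: a collection of nonempty finite subsets of `V`
closed under taking nonempty subsets. -/
def IsComplex {V : Type*} (K : Set (Finset V)) : Prop :=
  ∀ σ ∈ K, σ.Nonempty ∧ ∀ τ ⊆ σ, τ.Nonempty → τ ∈ K

/-- The space of chains supported on simplices of `K` with `k` vertices
(i.e. the simplicial chain group of degree `k - 1`). -/
noncomputable def chainCard {V : Type*} [DecidableEq V] (K : Set (Finset V)) (k : ℕ) :
    Submodule (ZMod 2) (Ch V) :=
  Submodule.span (ZMod 2) {f | ∃ σ ∈ K, σ.card = k ∧ f = Finsupp.single σ 1}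

theorem chainCard_mono {V : Type*} [DecidableEq V] {K₁ K₂ : Set (Finset V)}
    (h : K₁ ⊆ K₂) (k : ℕ) : chainCard K₁ k ≤ chainCard K₂ k := by
  apply Submodule.span_mono
  rintro f ⟨σ, hσ, hc, rfl⟩
  exact ⟨σ, h hσ, hc, rfl⟩

/-- Cycles (in cardinality grading `k`, i.e. degree `k-1`) of a chain subcomplex `W`. -/
noncomputable def cyclesOf {V : Type*} [DecidableEq V] (W : ℕ → Submodule (ZMod 2) (Ch V)) (k : ℕ) :
    Submodule (ZMod 2) (Ch V) :=
  W k ⊓ LinearMap.ker (bdry V)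

/-- Boundaries (in cardinality grading `k`, i.e. degree `k-1`) of a chain subcomplex `W`. -/
noncomputable def bdriesOf {V : Type*} [DecidableEq V] (W : ℕ → Submodule (ZMod 2) (Ch V)) (k : ℕ) :
    Submodule (ZMod 2) (Ch V) :=
  Submodule.map (bdry V) (W (k + 1))

/-- Homology of the chain complex `W` in cardinality grading `k` (degree `k - 1`):
cycles modulo boundaries. -/
abbrev homolOf {V : Type*} [DecidableEq V] (W : ℕ → Submodule (ZMod 2) (Ch V)) (k : ℕ) :=
  ↥(cyclesOf W k) ⧸ (bdriesOf W k).comap (cyclesOf W k).subtype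

/-- The map on homology induced by a degreewise inclusion of chain complexes. -/
noncomputable def homolMap {V : Type*} [DecidableEq V]
    (W W' : ℕ → Submodule (ZMod 2) (Ch V)) (h : ∀ k, W k ≤ W' k) (k : ℕ) :
    homolOf W k →ₗ[ZMod 2] homolOf W' k :=
  Submodule.mapQ _ _ (Submodule.inclusion (inf_le_inf (h k) le_rfl))
    (by
      intro x hx
      simp only [Submodule.mem_comap, Submodule.subtype_apply, Submodule.coe_inclusion]
        at hx ⊢
      exact Submodule.map_mono (h (k + 1)) hx)

/-! Discrete Morse theory: partial matchings, acyclicity, the closure map. -/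

/-- `Covers σ τ`: `σ` covers `τ` in the face poset, i.e. `τ ⊆ σ` in codimension one. -/
def Covers {V : Type*} (σ τ : Finset V) : Prop :=
  τ ⊆ σ ∧ σ.card = τ.card + 1

/-- A partial matching: an involution `μ` on a set `M` of simplices matching each
simplex with a simplex that covers it or that it covers. -/
structure PartialMatching (V : Type*) where
  M : Set (Finset V)
  μ : Finset V → Finset V
  mem_M : ∀ σ ∈ M, μ σ ∈ M
  invol : ∀ σ ∈ M, μ (μ σ) = σ
  matched : ∀ σ ∈ M, Covers (μ σ) σ ∨ Covers σ (μ σ)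

/-- Acyclicity of a partial matching: there is no cyclic sequence
`σ₁ ≻ μ(σ₁) ≺ σ₂ ≻ μ(σ₂) ≺ ⋯ ≺ σ_l ≻ μ(σ_l) ≺ σ₁` with `l ≥ 2` and the `σᵢ` distinct. -/
def PartialMatching.Acyclic {V : Type*} (m : PartialMatching V) : Prop :=
  ¬ ∃ (l : ℕ) (f : ℕ → Finset V), 2 ≤ l ∧
      (∀ i < l, ∀ j < l, f i = f j → i = j) ∧
      (∀ i < l, f i ∈ m.M ∧ Covers (f i) (m.μ (f i))) ∧
      (∀ i < l, Covers (f ((i + 1) % l)) (m.μ (f i)))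

/-- `M^↑`: matched simplices lying above their partner. -/
def Mup {V : Type*} (m : PartialMatching V) : Set (Finset V) :=
  {σ | σ ∈ m.M ∧ Covers σ (m.μ σ)}

/-- `M_q^↑` in cardinality grading: elements of `M^↑` with `k` vertices (degree `k-1`). -/
def MupCard {V : Type*} (m : PartialMatching V) (k : ℕ) : Set (Finset V) :=
  {σ | σ ∈ Mup m ∧ σ.card = k}

/-- `R_q(μ)` in cardinality grading: the unmatched (critical) simplices of `K`
with `k` vertices (degree `k-1`). -/
def Rcard {V : Type*} (K : Set (Finset V)) (m : PartialMatching V) (k : ℕ) :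
    Set (Finset V) :=
  {σ | σ ∈ K ∧ σ.card = k ∧ σ ∉ m.M}

/-- `(α, β)` is an edge of the graph `G(μ)`: `μ β` is defined, `β` lies above its
partner, and `α` covers `μ β` (with `β ≠ α`). -/
def IsEdge {V : Type*} (m : PartialMatching V) (α β : Finset V) : Prop :=
  β ≠ α ∧ β ∈ m.M ∧ Covers β (m.μ β) ∧ Covers α (m.μ β)

open scoped Classical in
/-- `φ` is the closure map of the matching `m` on `K`: it satisfies the defining
recursion `φ α = α + ∑ φ β` over the edges `(α, β)` emanating from `α` in `G(μ)`. -/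
def IsClosure {V : Type*} [Fintype V] [DecidableEq V] (K : Set (Finset V))
    (m : PartialMatching V) (φ : Finset V → Ch V) : Prop :=
  ∀ α ∈ K, φ α = Finsupp.single α 1 + ∑ β : Finset V, if IsEdge m α β then φ β else 0

/-- The degree-`(k-1)` chain group of the Morse (critical) complex of `C`:
the span of the closures of the unmatched simplices of `C` with `k` vertices. -/
noncomputable def critWOn {V : Type*} [DecidableEq V] (C : Set (Finset V))
    (m : PartialMatching V) (φ : Finset V → Ch V) (k : ℕ) :
    Submodule (ZMod 2) (Ch V) :=
  Submodule.span (ZMod 2) {f | ∃ γ, γ ∈ C ∧ γ.card = k ∧ γ ∉ m.M ∧ f = φ γ}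

theorem critWOn_mono {V : Type*} [DecidableEq V] {C₁ C₂ : Set (Finset V)}
    (h : C₁ ⊆ C₂) (m : PartialMatching V) (φ : Finset V → Ch V) (k : ℕ) :
    critWOn C₁ m φ k ≤ critWOn C₂ m φ k := by
  apply Submodule.span_mono
  rintro f ⟨γ, hγ, hc, hm, rfl⟩
  exact ⟨γ, h hγ, hc, hm, rfl⟩

/-- The degree-`(k-1)` chain group of the complex `Match`, spanned by `M_{k-1}^↑`
together with the boundaries of the elements of `M_k^↑`. -/
noncomputable def matchW {V : Type*} [DecidableEq V] (m : PartialMatching V) (k : ℕ) :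
    Submodule (ZMod 2) (Ch V) :=
  Submodule.span (ZMod 2)
    ({f | ∃ σ ∈ MupCard m k, f = Finsupp.single σ 1} ∪
      {f | ∃ β ∈ MupCard m (k + 1), f = bdry V (Finsupp.single β 1)})

/-- The set `B_q^R ∪ B_q^↑ ∪ B_q^↓` (in cardinality grading `k = q + 1`). -/
noncomputable def morseBasis {V : Type*} [DecidableEq V] (K : Set (Finset V))
    (m : PartialMatching V) (φ : Finset V → Ch V) (k : ℕ) : Set (Ch V) :=
  {f | ∃ γ ∈ Rcard K m k, f = φ γ} ∪
    ({f | ∃ σ ∈ MupCard m k, f = Finsupp.single σ 1} ∪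
      {f | ∃ β ∈ MupCard m (k + 1), f = bdry V (Finsupp.single β 1)})
/-! ### Auxiliary lemmas -/

set_option linter.unusedSectionVars false

section AuxBasic

variable {V : Type*} [DecidableEq V]

instance coversDecidable {σ τ : Finset V} : Decidable (Covers σ τ) := by
  unfold Covers; infer_instance

theorem zmod2_ne_zero {a : ZMod 2} (h : a ≠ 0) : a = 1 := by
  revert h; revert a; decide

theorem covers_card_lt {σ τ : Finset V} (h : Covers σ τ) : τ.card < σ.card := by
  rw [h.2]; omega

theorem covers_not_covers {σ τ : Finset V} (h : Covers σ τ) : ¬ Covers τ σ := by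
  intro h'; have := covers_card_lt h; have := covers_card_lt h'; omega

theorem covers_erase_unique {σ τ : Finset V} (h : Covers σ τ) :
    ∃ v₀ ∈ σ, σ.erase v₀ = τ ∧ ∀ v ∈ σ, σ.erase v = τ → v = v₀ := by
  obtain ⟨hsub, hcard⟩ := h
  have hsd : (σ \ τ).card = 1 := by
    rw [Finset.card_sdiff_of_subset hsub]; omega
  obtain ⟨v₀, hv₀⟩ := Finset.card_eq_one.mp hsd
  have hmem : v₀ ∈ σ \ τ := by rw [hv₀]; exact Finset.mem_singleton_self v₀
  have hv₀σ : v₀ ∈ σ := (Finset.mem_sdiff.mp hmem).1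
  have hv₀τ : v₀ ∉ τ := (Finset.mem_sdiff.mp hmem).2
  have huniq : ∀ v ∈ σ, σ.erase v = τ → v = v₀ := by
    intro v hv hev
    have : v ∈ σ \ τ := Finset.mem_sdiff.mpr ⟨hv, fun hvτ => by
      have : v ∈ σ.erase v := hev ▸ hvτ
      exact (Finset.notMem_erase v σ) this⟩
    rw [hv₀] at this; exact Finset.mem_singleton.mp this
  refine ⟨v₀, hv₀σ, ?_, huniq⟩
  have hτsub : τ ⊆ σ.erase v₀ := by
    intro x hx
    exact Finset.mem_erase.mpr ⟨fun hxv => hv₀τ (hxv ▸ hx), hsub hx⟩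
  have hcards : (σ.erase v₀).card ≤ τ.card := by
    rw [Finset.card_erase_of_mem hv₀σ]; omega
  exact (Finset.eq_of_subset_of_card_le hτsub hcards).symm

theorem bdry_single (σ : Finset V) :
    bdry V (Finsupp.single σ (1 : ZMod 2)) =
      if σ.card ≤ 1 then 0 else ∑ v ∈ σ, Finsupp.single (σ.erase v) (1 : ZMod 2) := by
  simp [bdry, Finsupp.linearCombination_single]

theorem bdry_single_apply (σ τ : Finset V) (hτ : τ.Nonempty) :
    (bdry V (Finsupp.single σ (1 : ZMod 2))) τ = if Covers σ τ then 1 else 0 := by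
  rw [bdry_single]
  by_cases hc : σ.card ≤ 1
  · rw [if_pos hc]
    have : ¬ Covers σ τ := by
      intro h
      have := covers_card_lt h
      have := Finset.card_pos.mpr hτ
      omega
    rw [if_neg this]; rfl
  · rw [if_neg hc]
    rw [Finsupp.finset_sum_apply]
    by_cases hcov : Covers σ τ
    · obtain ⟨v₀, hv₀σ, hev, huniq⟩ := covers_erase_unique hcov
      rw [if_pos hcov]
      rw [Finset.sum_eq_single_of_mem v₀ hv₀σ]
      · rw [Finsupp.single_apply, if_pos hev]
      · intro v hv hne
        rw [Finsupp.single_apply, if_neg]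
        intro hev'
        exact hne (huniq v hv hev')
    · rw [if_neg hcov]
      apply Finset.sum_eq_zero
      intro v hv
      rw [Finsupp.single_apply, if_neg]
      intro hev
      apply hcov
      refine ⟨hev ▸ Finset.erase_subset v σ, ?_⟩
      rw [← hev, Finset.card_erase_of_mem hv]
      have : 0 < σ.card := Finset.card_pos.mpr ⟨v, hv⟩
      omega

theorem bdry_apply_empty (x : Ch V) : (bdry V x) ∅ = 0 := by
  induction x using Finsupp.induction_linear with
  | zero => simp
  | add a b ha hb => rw [map_add, Finsupp.add_apply, ha, hb, add_zero]
  | single σ c =>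
    have : Finsupp.single σ c = c • Finsupp.single σ (1 : ZMod 2) := by
      rw [Finsupp.smul_single, smul_eq_mul, mul_one]
    rw [this, map_smul, Finsupp.smul_apply, bdry_single]
    by_cases hc : σ.card ≤ 1
    · simp [hc]
    · rw [if_neg hc, Finsupp.finset_sum_apply]
      have : ∀ v ∈ σ, (Finsupp.single (σ.erase v) (1 : ZMod 2)) ∅ = 0 := by
        intro v hv
        rw [Finsupp.single_apply, if_neg]
        intro h
        have : σ.card ≤ 1 := by
          have := Finset.card_erase_of_mem hv
          rw [h] at this
          simp at this
          omega
        exact hc this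
      rw [Finset.sum_congr rfl this, Finset.sum_const_zero, smul_zero]

theorem bdry_apply [Fintype V] (x : Ch V) (τ : Finset V) (hτ : τ.Nonempty) :
    (bdry V x) τ = ∑ σ : Finset V, if Covers σ τ then x σ else 0 := by
  induction x using Finsupp.induction_linear with
  | zero => simp
  | add a b ha hb =>
    rw [map_add, Finsupp.add_apply, ha, hb, ← Finset.sum_add_distrib]
    apply Finset.sum_congr rfl
    intro σ _
    rw [Finsupp.add_apply]
    split <;> simp
  | single σ c =>
    have hs : Finsupp.single σ c = c • Finsupp.single σ (1 : ZMod 2) := by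
      rw [Finsupp.smul_single, smul_eq_mul, mul_one]
    rw [hs, map_smul, Finsupp.smul_apply, bdry_single_apply σ τ hτ]
    rw [Finset.sum_eq_single σ]
    · rw [Finsupp.smul_apply, Finsupp.single_apply, if_pos rfl]
      split <;> simp
    · intro σ' _ hne
      rw [Finsupp.smul_apply, Finsupp.single_apply, if_neg (Ne.symm hne)]
      split <;> simp
    · intro h; exact absurd (Finset.mem_univ σ) h

end AuxBasic
section AuxB

variable {V : Type*} [DecidableEq V]

theorem bdry_bdry_single (σ : Finset V) :
    bdry V (bdry V (Finsupp.single σ (1 : ZMod 2))) = 0 := by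
  rw [bdry_single]
  by_cases hc : σ.card ≤ 1
  · rw [if_pos hc, map_zero]
  · rw [if_neg hc, map_sum]
    have hrw : ∀ v ∈ σ, bdry V (Finsupp.single (σ.erase v) (1 : ZMod 2)) =
        if σ.card ≤ 2 then 0
        else ∑ w ∈ σ.erase v, Finsupp.single ((σ.erase v).erase w) (1 : ZMod 2) := by
      intro v hv
      rw [bdry_single, Finset.card_erase_of_mem hv]
      by_cases h2 : σ.card ≤ 2
      · rw [if_pos (by omega), if_pos h2]
      · rw [if_neg (by omega), if_neg h2]
    rw [Finset.sum_congr rfl hrw]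
    by_cases h2 : σ.card ≤ 2
    · simp [h2]
    · simp only [if_neg h2]
      rw [Finset.sum_sigma']
      refine Finset.sum_involution (fun p _ => ⟨p.2, p.1⟩) ?_ ?_ ?gmem ?_
      case gmem =>
        intro p hp
        have hmem := Finset.mem_sigma.mp hp
        refine Finset.mem_sigma.mpr ⟨Finset.mem_of_mem_erase hmem.2, ?_⟩
        refine Finset.mem_erase.mpr ⟨?_, hmem.1⟩
        exact fun h => (Finset.mem_erase.mp hmem.2).1 h.symm
      · intro p hp
        rw [Finset.erase_right_comm]
        rw [← two_smul (ZMod 2) (Finsupp.single ((σ.erase p.2).erase p.1) (1 : ZMod 2))]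
        have : (2 : ZMod 2) = 0 := by decide
        rw [this, zero_smul]
      · intro p hp _
        intro he
        have hmem := Finset.mem_sigma.mp hp
        have : p.2 ≠ p.1 := (Finset.mem_erase.mp hmem.2).1
        exact this (congrArg Sigma.fst he)
      · intro p hp; rfl

theorem bdry_bdry (x : Ch V) : bdry V (bdry V x) = 0 := by
  induction x using Finsupp.induction_linear with
  | zero => simp
  | add a b ha hb => rw [map_add, map_add, ha, hb, add_zero]
  | single σ c =>
    have : Finsupp.single σ c = c • Finsupp.single σ (1 : ZMod 2) := by
      rw [Finsupp.smul_single, smul_eq_mul, mul_one]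
    rw [this, map_smul, map_smul, bdry_bdry_single, smul_zero]

/-- Evaluating a span of chains under a linear functional that kills all generators. -/
theorem span_eval_zero {s : Set (Ch V)} {x : Ch V} (L : Ch V →ₗ[ZMod 2] ZMod 2)
    (hx : x ∈ Submodule.span (ZMod 2) s) (h : ∀ f ∈ s, L f = 0) : L x = 0 := by
  have : Submodule.span (ZMod 2) s ≤ LinearMap.ker L := by
    rw [Submodule.span_le]; exact h
  exact this hx

theorem span_single_eval {S : Set (Finset V)} {x : Ch V}
    (hx : x ∈ Submodule.span (ZMod 2) {f | ∃ σ ∈ S, f = Finsupp.single σ (1 : ZMod 2)})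
    {τ : Finset V} (hτ : τ ∉ S) : x τ = 0 := by
  have := span_eval_zero (Finsupp.lapply τ) hx ?_
  · exact this
  · rintro f ⟨σ, hσ, rfl⟩
    simp only [Finsupp.lapply_apply, Finsupp.single_apply]
    rw [if_neg]; intro h; exact hτ (h ▸ hσ)

end AuxB
section AuxC

variable {V : Type*} [DecidableEq V] {m : PartialMatching V}

theorem mu_inj {σ σ' : Finset V} (hσ : σ ∈ m.M) (hσ' : σ' ∈ m.M)
    (h : m.μ σ = m.μ σ') : σ = σ' := by
  rw [← m.invol σ hσ, h, m.invol σ' hσ']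

theorem isEdge_card {α β : Finset V} (h : IsEdge m α β) : β.card = α.card := by
  obtain ⟨-, -, h1, h2⟩ := h
  rw [h1.2, h2.2]

theorem no_edge_cycle (hac : m.Acyclic) (n : ℕ) (g : ℕ → Finset V) (hn : 0 < n)
    (hedge : ∀ s, s < n → IsEdge m (g s) (g (s + 1))) : g 0 ≠ g n := by
  induction n using Nat.strong_induction_on generalizing g with
  | _ n ih =>
  intro hgn
  by_cases hrep : ∃ a b, a < b ∧ b ≤ n ∧ b - a < n ∧ g a = g b
  · obtain ⟨a, b, hab, hbn, hlt, heq⟩ := hrep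
    refine ih (b - a) hlt (fun s => g (a + s)) (by omega) ?_ ?_
    · intro s hs
      have h := hedge (a + s) (by omega)
      have : a + s + 1 = a + (s + 1) := by omega
      rwa [this] at h
    · show g (a + 0) = g (a + (b - a))
      have h0 : a + 0 = a := by omega
      have hb : a + (b - a) = b := by omega
      rw [h0, hb]; exact heq
  · push_neg at hrep
    have hn2 : 2 ≤ n := by
      rcases Nat.lt_or_ge n 2 with h2 | h2
      · interval_cases n
        · exact absurd hgn.symm (hedge 0 (by omega)).1
      · exact h2
    apply hac
    have hmod : ∀ s, s < n → s % n = s := fun s hs => Nat.mod_eq_of_lt hs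
    refine ⟨n, fun s => g (n - s % n), hn2, ?_, ?_, ?_⟩
    · intro i hi j hj heq
      have heq : g (n - i % n) = g (n - j % n) := heq
      rw [hmod i hi, hmod j hj] at heq
      by_contra hne
      rcases Nat.lt_or_ge i j with hij | hij
      · exact hrep (n - j) (n - i) (by omega) (by omega) (by omega) heq.symm
      · have hij' : j < i := by omega
        exact hrep (n - i) (n - j) (by omega) (by omega) (by omega) heq
    · intro i hi
      show g (n - i % n) ∈ m.M ∧ Covers (g (n - i % n)) (m.μ (g (n - i % n)))
      rw [hmod i hi]
      have h := hedge (n - i - 1) (by omega)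
      have he : n - i - 1 + 1 = n - i := by omega
      rw [he] at h
      exact ⟨h.2.1, h.2.2.1⟩
    · intro i hi
      show Covers (g (n - (i + 1) % n % n)) (m.μ (g (n - i % n)))
      rw [hmod i hi]
      rcases Nat.lt_or_ge (i + 1) n with h1 | h1
      · rw [Nat.mod_eq_of_lt h1, Nat.mod_eq_of_lt h1]
        have h := hedge (n - i - 1) (by omega)
        have he : n - i - 1 + 1 = n - i := by omega
        rw [he] at h
        have he2 : n - (i + 1) = n - i - 1 := by omega
        rw [he2]
        exact h.2.2.2
      · have hin : i + 1 = n := by omega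
        rw [hin, Nat.mod_self, Nat.zero_mod, Nat.sub_zero]
        have h := hedge 0 (by omega)
        have hieq : n - i = 1 := by omega
        rw [hieq, ← hgn]
        simpa using h.2.2.2

theorem transGen_edge_path {a b : Finset V}
    (h : Relation.TransGen (fun x y => IsEdge m x y) a b) :
    ∃ (n : ℕ) (g : ℕ → Finset V), 0 < n ∧ g 0 = a ∧ g n = b ∧
      ∀ s, s < n → IsEdge m (g s) (g (s + 1)) := by
  induction h with
  | @single c hc =>
    refine ⟨1, fun i => if i = 0 then a else c, Nat.one_pos, by simp, by simp, ?_⟩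
    intro s hs
    have : s = 0 := by omega
    subst this
    simpa using hc
  | @tail b c hab hbc ih =>
    obtain ⟨n, g, hn, h0, hnb, hedge⟩ := ih
    refine ⟨n + 1, fun s => if s ≤ n then g s else c, by omega, by simp [hn.le, h0], ?_, ?_⟩
    · simp
    · intro s hs
      rcases Nat.lt_or_ge s n with h1 | h1
      · simpa [h1.le, Nat.succ_le_of_lt h1] using hedge s h1
      · have : s = n := by omega
        subst this
        simpa [hnb] using hbc

theorem edge_irrefl_trans (hac : m.Acyclic) (a : Finset V) :
    ¬ Relation.TransGen (fun x y => IsEdge m x y) a a := by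
  intro h
  obtain ⟨n, g, hn, h0, hna, hedge⟩ := transGen_edge_path h
  exact no_edge_cycle hac n g hn hedge (by rw [h0, hna])

theorem edge_wf [Fintype V] (hac : m.Acyclic) :
    WellFounded (fun β α : Finset V => IsEdge m α β) := by
  have htrans : IsTrans (Finset V) (Relation.TransGen (fun β α : Finset V => IsEdge m α β)) :=
    ⟨fun a b c h1 h2 => h1.trans h2⟩
  have hirr : IsIrrefl (Finset V) (Relation.TransGen (fun β α : Finset V => IsEdge m α β)) := by
    constructor
    intro a h
    have : Relation.TransGen (fun x y : Finset V => IsEdge m x y) a a :=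
      (Relation.transGen_swap).mp h
    exact edge_irrefl_trans hac a this
  haveI := htrans; haveI := hirr
  have hsub : Subrelation (fun β α : Finset V => IsEdge m α β)
      (Relation.TransGen (fun β α : Finset V => IsEdge m α β)) :=
    fun h => Relation.TransGen.single h
  exact hsub.wf (Finite.wellFounded_of_trans_of_irrefl _)

theorem redge_wf [Fintype V] (hac : m.Acyclic) :
    WellFounded (fun α β : Finset V => IsEdge m α β) := by
  have htrans : IsTrans (Finset V) (Relation.TransGen (fun α β : Finset V => IsEdge m α β)) :=
    ⟨fun a b c h1 h2 => h1.trans h2⟩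
  have hirr : IsIrrefl (Finset V) (Relation.TransGen (fun α β : Finset V => IsEdge m α β)) := by
    constructor
    intro a h
    exact edge_irrefl_trans hac a h
  haveI := htrans; haveI := hirr
  have hsub : Subrelation (fun α β : Finset V => IsEdge m α β)
      (Relation.TransGen (fun α β : Finset V => IsEdge m α β)) :=
    fun h => Relation.TransGen.single h
  exact hsub.wf (Finite.wellFounded_of_trans_of_irrefl _)

end AuxC
section AuxD

variable {V : Type*} [DecidableEq V] {m : PartialMatching V}

/-- The span of the up-simplices of `C` in cardinality `k`. -/
noncomputable def upSpan (m : PartialMatching V) (C : Set (Finset V)) (k : ℕ) :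
    Submodule (ZMod 2) (Ch V) :=
  Submodule.span (ZMod 2)
    {f | ∃ σ ∈ {σ | σ ∈ C ∧ σ ∈ Mup m ∧ σ.card = k}, f = Finsupp.single σ (1 : ZMod 2)}

/-- The Match subcomplex restricted to `C`. -/
noncomputable def matchWOn (m : PartialMatching V) (C : Set (Finset V)) (k : ℕ) :
    Submodule (ZMod 2) (Ch V) :=
  upSpan m C k ⊔ Submodule.map (bdry V) (upSpan m C (k + 1))

/-- Triangularity: a chain supported on up-simplices whose boundary vanishes on all
the corresponding down-simplices is zero. -/
theorem upspan_triangular [Fintype V] (hac : m.Acyclic) {S : Set (Finset V)}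
    (hS : ∀ σ ∈ S, σ ∈ Mup m ∧ (m.μ σ).Nonempty) {x : Ch V}
    (hx : x ∈ Submodule.span (ZMod 2) {f | ∃ σ ∈ S, f = Finsupp.single σ (1 : ZMod 2)})
    (hb : ∀ β₀ ∈ S, (bdry V x) (m.μ β₀) = 0) : x = 0 := by
  have hnotin : ∀ τ, τ ∉ S → x τ = 0 := fun τ hτ => span_single_eval hx hτ
  have hin : ∀ τ, τ ∈ S → x τ = 0 := by
    intro τ
    induction τ using (redge_wf hac).induction with
    | _ τ ih =>
    intro hτS
    obtain ⟨hup, hμτ⟩ := hS τ hτS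
    have h0 := hb τ hτS
    rw [bdry_apply x (m.μ τ) hμτ] at h0
    rw [Finset.sum_eq_single τ] at h0
    · rwa [if_pos hup.2] at h0
    · intro σ _ hne'
      split
      case isTrue hcov =>
        by_cases hσS : σ ∈ S
        · exact ih σ ⟨Ne.symm hne', hup.1, hup.2, hcov⟩ hσS
        · exact hnotin σ hσS
      case isFalse => rfl
    · exact fun hn => absurd (Finset.mem_univ τ) hn
  ext τ
  by_cases hτ : τ ∈ S
  · rw [hin τ hτ]; rfl
  · rw [hnotin τ hτ]; rfl

end AuxD
section Main

variable {V : Type*} [Fintype V] [DecidableEq V] {I : Type*} [LinearOrder I]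
    {K : I → Set (Finset V)} (hmono : ∀ i j, i ≤ j → K i ⊆ K j)
    (hcx : ∀ i, IsComplex (K i))
    {Kinf : Set (Finset V)} (hKinf : Kinf = ⋃ i, K i)
    {m : PartialMatching V} (hMK : m.M ⊆ Kinf) (hac : m.Acyclic)
    {h : Finset V → I}
    (hh : ∀ σ ∈ Kinf, σ ∈ K (h σ) ∧ ∀ i, σ ∈ K i → h σ ≤ i)
    (hresp : ∀ σ ∈ m.M, h (m.μ σ) = h σ)
    {φ : Finset V → Ch V} (hφ : IsClosure Kinf m φ)

include hKinf in
theorem Ki_sub_Kinf (i : I) : K i ⊆ Kinf := by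
  subst hKinf; exact Set.subset_iUnion K i

include hKinf hcx in
theorem Kinf_nonempty {σ : Finset V} (hσ : σ ∈ Kinf) : σ.Nonempty := by
  subst hKinf
  obtain ⟨Ki, ⟨i, rfl⟩, hi⟩ := hσ
  exact (hcx i σ hi).1

include hMK hKinf hcx in
theorem M_nonempty {σ : Finset V} (hσ : σ ∈ m.M) : σ.Nonempty :=
  Kinf_nonempty hcx hKinf (hMK hσ)

include hMK hKinf hcx in
theorem muM_nonempty {σ : Finset V} (hσ : σ ∈ m.M) : (m.μ σ).Nonempty :=
  M_nonempty hcx hKinf hMK (m.mem_M σ hσ)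

include hmono hcx hKinf hMK hh hresp in
theorem mclosed {σ : Finset V} {i : I} (hσM : σ ∈ m.M) (hσi : σ ∈ K i) :
    m.μ σ ∈ K i := by
  have hKi : σ ∈ Kinf := Ki_sub_Kinf hKinf i hσi
  have hμM : m.μ σ ∈ m.M := m.mem_M σ hσM
  have hμK : m.μ σ ∈ Kinf := hMK hμM
  have h1 : h (m.μ σ) = h σ := hresp σ hσM
  have h2 : h σ ≤ i := (hh σ hKi).2 i hσi
  exact hmono (h (m.μ σ)) i (h1 ▸ h2) ((hh (m.μ σ) hμK).1)

include hmono hcx hKinf hMK hh hresp in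
theorem edge_filt {α β : Finset V} (hE : IsEdge m α β) :
    ∀ i, α ∈ K i → β ∈ K i := by
  intro i hα
  obtain ⟨hne, hβM, hβup, hcov⟩ := hE
  have hμβM : m.μ β ∈ m.M := m.mem_M β hβM
  have hμβne : (m.μ β).Nonempty := M_nonempty hcx hKinf hMK hμβM
  have hμβi : m.μ β ∈ K i := (hcx i α hα).2 (m.μ β) hcov.1 hμβne
  have hβKinf : β ∈ Kinf := hMK hβM
  have h1 : h (m.μ β) ≤ i := (hh (m.μ β) (hMK hμβM)).2 i hμβi
  have h2 : h (m.μ β) = h β := hresp β hβM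
  exact hmono (h β) i (h2 ▸ h1) ((hh β hβKinf).1)

include hmono hcx hKinf hMK hac hh hresp hφ in
theorem phi_decomp : ∀ α ∈ Kinf, φ α - Finsupp.single α (1 : ZMod 2) ∈
    Submodule.span (ZMod 2)
      {f | ∃ σ ∈ {σ | σ ∈ Mup m ∧ σ.card = α.card ∧ ∀ i, α ∈ K i → σ ∈ K i},
        f = Finsupp.single σ (1 : ZMod 2)} := by
  intro α
  induction α using (edge_wf hac).induction with
  | _ α ih =>
  intro hα
  rw [hφ α hα, add_sub_cancel_left]
  apply Submodule.sum_mem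
  intro β _
  split
  case isTrue hE =>
    have hβK : β ∈ Kinf := hMK hE.2.1
    have hcard : β.card = α.card := isEdge_card hE
    have hfilt : ∀ i, α ∈ K i → β ∈ K i := edge_filt hmono hcx hKinf hMK hh hresp hE
    have : φ β = (φ β - Finsupp.single β (1 : ZMod 2)) + Finsupp.single β (1 : ZMod 2) := by
      rw [sub_add_cancel]
    rw [this]
    apply Submodule.add_mem
    · refine Submodule.span_mono ?_ (ih β hE hβK)
      rintro f ⟨σ, ⟨hσup, hσc, hσf⟩, rfl⟩
      exact ⟨σ, ⟨hσup, hσc.trans hcard, fun i hi => hσf i (hfilt i hi)⟩, rfl⟩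
    · exact Submodule.subset_span ⟨β, ⟨⟨hE.2.1, hE.2.2.1⟩, hcard, hfilt⟩, rfl⟩
  case isFalse => exact Submodule.zero_mem _

include hmono hcx hKinf hMK hac hh hresp hφ in
theorem phi_support {α τ : Finset V} (hα : α ∈ Kinf) (hτ : (φ α) τ ≠ 0) :
    τ = α ∨ (τ ∈ Mup m ∧ τ.card = α.card ∧ ∀ i, α ∈ K i → τ ∈ K i) := by
  by_contra hcon
  push_neg at hcon
  obtain ⟨hne, hnotS⟩ := hcon
  have hd := phi_decomp hmono hcx hKinf hMK hac hh hresp hφ α hα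
  have hnotS' : τ ∉ {σ | σ ∈ Mup m ∧ σ.card = α.card ∧ ∀ i, α ∈ K i → σ ∈ K i} := by
    intro hmem
    obtain ⟨i, hi1, hi2⟩ := hnotS hmem.1 hmem.2.1
    exact hi2 (hmem.2.2 i hi1)
  have h0 : (φ α - Finsupp.single α (1 : ZMod 2)) τ = 0 := span_single_eval hd hnotS'
  rw [Finsupp.sub_apply, Finsupp.single_apply, if_neg (fun he => hne he.symm), sub_zero] at h0
  exact hτ h0

include hmono hcx hKinf hMK hac hh hresp hφ in
theorem phi_self {α : Finset V} (hα : α ∈ Kinf) (hαM : α ∉ m.M) : (φ α) α = 1 := by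
  have hd := phi_decomp hmono hcx hKinf hMK hac hh hresp hφ α hα
  have h0 : (φ α - Finsupp.single α (1 : ZMod 2)) α = 0 := by
    apply span_single_eval hd
    rintro ⟨hup, -⟩
    exact hαM hup.1
  rw [Finsupp.sub_apply, Finsupp.single_apply, if_pos rfl] at h0
  linear_combination (norm := ring_nf) h0

include hmono hcx hKinf hMK hac hh hresp hφ in
theorem bdry_phi_down : ∀ α ∈ Kinf, ∀ β₀, β₀ ∈ Mup m → β₀.card = α.card →
    (bdry V (φ α)) (m.μ β₀) = if α = β₀ then 1 else 0 := by
  intro α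
  induction α using (edge_wf hac).induction with
  | _ α ih =>
  intro hα β₀ hβ₀ hcard
  classical
  have hμβ₀ne : (m.μ β₀).Nonempty := muM_nonempty hcx hKinf hMK hβ₀.1
  rw [hφ α hα, map_add, map_sum, Finsupp.add_apply, Finsupp.finset_sum_apply]
  have hsum : ∀ β : Finset V, (bdry V (if IsEdge m α β then φ β else 0)) (m.μ β₀)
      = if IsEdge m α β then (if β = β₀ then (1 : ZMod 2) else 0) else 0 := by
    intro β
    split
    case isTrue hE =>
      exact ih β hE (hMK hE.2.1) β₀ hβ₀ (hcard.trans (isEdge_card hE).symm)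
    case isFalse hE => rw [map_zero]; rfl
  rw [Finset.sum_congr rfl (fun β _ => hsum β)]
  have hswap : ∀ β : Finset V,
      (if IsEdge m α β then (if β = β₀ then (1 : ZMod 2) else 0) else 0)
      = if β = β₀ then (if IsEdge m α β then (1 : ZMod 2) else 0) else 0 := by
    intro β
    by_cases h1 : IsEdge m α β <;> by_cases h2 : β = β₀ <;> simp [h1, h2]
  rw [Finset.sum_congr rfl (fun β _ => hswap β), Finset.sum_ite_eq' Finset.univ β₀ _,
    if_pos (Finset.mem_univ β₀), bdry_single_apply _ _ hμβ₀ne]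
  by_cases heq : α = β₀
  · subst heq
    rw [if_pos hβ₀.2, if_pos rfl, if_neg (fun hE : IsEdge m α α => hE.1 rfl), add_zero]
  · rw [if_neg heq]
    by_cases hcov : Covers α (m.μ β₀)
    · have hE : IsEdge m α β₀ := ⟨fun hx => heq hx.symm, hβ₀.1, hβ₀.2, hcov⟩
      rw [if_pos hcov, if_pos hE]
      decide
    · have hnE : ¬ IsEdge m α β₀ := fun hE => hcov hE.2.2.2
      rw [if_neg hcov, if_neg hnE, add_zero]

include hmono hcx hKinf hMK hac hh hresp hφ in
theorem bdry_phi_crit (i : I) {γ : Finset V} (hγi : γ ∈ K i) (hγM : γ ∉ m.M) {k : ℕ}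
    (hk : γ.card = k + 1) : bdry V (φ γ) ∈ critWOn (K i) m φ k := by
  classical
  have hγinf : γ ∈ Kinf := Ki_sub_Kinf hKinf i hγi
  have hsupp : ∀ τ : Finset V, (bdry V (φ γ)) τ ≠ 0 →
      τ.Nonempty ∧ (∀ j, γ ∈ K j → τ ∈ K j) ∧ τ.card = k := by
    intro τ hτ
    have hτne : τ.Nonempty := by
      rcases Finset.eq_empty_or_nonempty τ with rfl | hne
      · exact absurd (bdry_apply_empty _) hτ
      · exact hne
    rw [bdry_apply _ τ hτne] at hτ
    obtain ⟨σ, -, hσ⟩ := Finset.exists_ne_zero_of_sum_ne_zero hτ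
    have hcov : Covers σ τ := by
      by_contra hc; rw [if_neg hc] at hσ; exact hσ rfl
    rw [if_pos hcov] at hσ
    have hσs := phi_support hmono hcx hKinf hMK hac hh hresp hφ hγinf hσ
    have hσK : ∀ j, γ ∈ K j → σ ∈ K j := by
      rcases hσs with rfl | ⟨-, -, hf⟩
      · exact fun j hj => hj
      · exact hf
    have hσc : σ.card = k + 1 := by
      rcases hσs with rfl | ⟨-, hc, -⟩
      · exact hk
      · exact hc.trans hk
    have hτc : τ.card = k := by have := hcov.2; omega
    exact ⟨hτne, fun j hj => (hcx j σ (hσK j hj)).2 τ hcov.1 hτne, hτc⟩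
  set A : Finset (Finset V) := Finset.univ.filter
    (fun γ' => γ' ∈ Kinf ∧ γ' ∉ m.M ∧ γ'.card = k ∧ (bdry V (φ γ)) γ' ≠ 0) with hAdef
  have hA : ∀ γ' ∈ A, γ' ∈ Kinf ∧ γ' ∉ m.M ∧ γ'.card = k ∧ (bdry V (φ γ)) γ' ≠ 0 :=
    fun γ' hγ' => (Finset.mem_filter.mp hγ').2
  set y : Ch V := ∑ γ' ∈ A, φ γ' with hydef
  set UpK : Set (Finset V) := {τ | τ ∈ Mup m ∧ τ.card = k} with hUdef
  have hyτ : ∀ τ : Finset V, τ ∉ UpK → y τ = (if τ ∈ A then 1 else 0) := by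
    intro τ hτU
    have hterm : ∀ γ' ∈ A, (φ γ') τ = if γ' = τ then 1 else 0 := by
      intro γ' hγ'
      obtain ⟨hγ'K, hγ'M, hγ'c, -⟩ := hA γ' hγ'
      by_cases he : γ' = τ
      · subst he
        rw [if_pos rfl]
        exact phi_self hmono hcx hKinf hMK hac hh hresp hφ hγ'K hγ'M
      · rw [if_neg he]
        by_contra hne0
        rcases phi_support hmono hcx hKinf hMK hac hh hresp hφ hγ'K hne0 with he2 | ⟨hup, hcc, -⟩
        · exact he he2.symm
        · exact hτU ⟨hup, hcc.trans hγ'c⟩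
    rw [hydef, Finsupp.finset_sum_apply, Finset.sum_congr rfl hterm,
      Finset.sum_ite_eq' A τ _]
  have hN : ∀ τ : Finset V, τ ∉ UpK → (bdry V (φ γ)) τ = y τ := by
    intro τ hτU
    rw [hyτ τ hτU]
    by_cases hτA : τ ∈ A
    · rw [if_pos hτA]
      exact zmod2_ne_zero (hA τ hτA).2.2.2
    · rw [if_neg hτA]
      by_contra hx0
      obtain ⟨hτne, hτK, hτc⟩ := hsupp τ hx0
      have hτinf : τ ∈ Kinf := Ki_sub_Kinf hKinf i (hτK i hγi)
      have hτM : τ ∈ m.M := by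
        by_contra hM
        exact hτA (Finset.mem_filter.mpr ⟨Finset.mem_univ τ, hτinf, hM, hτc, hx0⟩)
      rcases m.matched τ hτM with hdown | hup
      · have hβ₀ : m.μ τ ∈ Mup m := ⟨m.mem_M τ hτM, by rw [m.invol τ hτM]; exact hdown⟩
        have hβc : (m.μ τ).card = γ.card := by rw [hdown.2, hτc, hk]
        have hval := bdry_phi_down hmono hcx hKinf hMK hac hh hresp hφ γ hγinf
          (m.μ τ) hβ₀ hβc
        rw [m.invol τ hτM] at hval
        have hγne : γ ≠ m.μ τ := fun he => hγM (he ▸ m.mem_M τ hτM)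
        rw [if_neg hγne] at hval
        exact hx0 hval
      · exact hτU ⟨⟨hτM, hup⟩, hτc⟩
  have hU : ∀ τ : Finset V, τ ∈ UpK → (bdry V (φ γ)) τ = y τ := by
    intro τ
    induction τ using (redge_wf hac).induction with
    | _ τ ihτ =>
    intro hτU
    obtain ⟨hτup, hτc⟩ := hτU
    have hμτne : (m.μ τ).Nonempty := muM_nonempty hcx hKinf hMK hτup.1
    have hby : (bdry V y) (m.μ τ) = 0 := by
      rw [hydef, map_sum, Finsupp.finset_sum_apply]
      have hterm : ∀ γ' ∈ A, (bdry V (φ γ')) (m.μ τ) = if γ' = τ then 1 else 0 := by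
        intro γ' hγ'
        obtain ⟨hγ'K, hγ'M, hγ'c, -⟩ := hA γ' hγ'
        exact bdry_phi_down hmono hcx hKinf hMK hac hh hresp hφ γ' hγ'K τ hτup
          (hτc.trans hγ'c.symm)
      rw [Finset.sum_congr rfl hterm, Finset.sum_ite_eq' A τ _,
        if_neg (fun hτA => (hA τ hτA).2.1 hτup.1)]
    have hbx : (bdry V (bdry V (φ γ))) (m.μ τ) = 0 := by rw [bdry_bdry]; rfl
    have hsum0 : ∑ σ : Finset V,
        (if Covers σ (m.μ τ) then (bdry V (φ γ) - y) σ else 0) = 0 := by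
      rw [← bdry_apply (bdry V (φ γ) - y) _ hμτne, map_sub, Finsupp.sub_apply, hbx, hby,
        sub_zero]
    rw [Finset.sum_eq_single τ] at hsum0
    · rw [if_pos hτup.2, Finsupp.sub_apply] at hsum0
      exact sub_eq_zero.mp hsum0
    · intro σ _ hσne
      split
      case isTrue hcov =>
        have hxy : (bdry V (φ γ)) σ = y σ := by
          by_cases hσU : σ ∈ UpK
          · exact ihτ σ ⟨Ne.symm hσne, hτup.1, hτup.2, hcov⟩ hσU
          · exact hN σ hσU
        rw [Finsupp.sub_apply, hxy, sub_self]
      case isFalse => rfl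
    · exact fun hn => absurd (Finset.mem_univ τ) hn
  have hxy : bdry V (φ γ) = y := by
    ext τ
    by_cases hτU : τ ∈ UpK
    · exact hU τ hτU
    · exact hN τ hτU
  rw [hxy, hydef]
  apply Submodule.sum_mem
  intro γ' hγ'
  obtain ⟨hγ'K, hγ'M, hγ'c, hγ'x⟩ := hA γ' hγ'
  have hγ'i : γ' ∈ K i := (hsupp γ' hγ'x).2.1 i hγi
  exact Submodule.subset_span ⟨γ', hγ'i, hγ'c, hγ'M, rfl⟩

include hmono hcx hKinf hMK hac hh hresp hφ in
theorem crit_eval_down (i : I) (k : ℕ) {x : Ch V} (hx : x ∈ critWOn (K i) m φ k)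
    {τ : Finset V} (hτM : τ ∈ m.M) (hτdn : Covers (m.μ τ) τ) : x τ = 0 := by
  refine span_eval_zero (Finsupp.lapply τ) hx ?_
  rintro f ⟨γ, hγ, hγc, hγM, rfl⟩
  simp only [Finsupp.lapply_apply]
  by_contra hne
  rcases phi_support hmono hcx hKinf hMK hac hh hresp hφ (Ki_sub_Kinf hKinf i hγ) hne with
    rfl | ⟨hup, -, -⟩
  · exact hγM hτM
  · exact covers_not_covers hτdn hup.2

include hmono hcx hKinf hMK hac hh hresp hφ in
theorem crit_eval_bdry (i : I) (k : ℕ) {x : Ch V} (hx : x ∈ critWOn (K i) m φ k)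
    {β₀ : Finset V} (hβ₀ : β₀ ∈ Mup m) (hβ₀c : β₀.card = k) :
    (bdry V x) (m.μ β₀) = 0 := by
  refine span_eval_zero ((Finsupp.lapply (m.μ β₀)).comp (bdry V)) hx ?_
  rintro f ⟨γ, hγ, hγc, hγM, rfl⟩
  simp only [LinearMap.comp_apply, Finsupp.lapply_apply]
  rw [bdry_phi_down hmono hcx hKinf hMK hac hh hresp hφ γ (Ki_sub_Kinf hKinf i hγ) β₀ hβ₀
    (hβ₀c.trans hγc.symm)]
  rw [if_neg (fun he => hγM (by rw [he]; exact hβ₀.1))]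

include hmono hcx hKinf hMK hac hh hresp hφ in
theorem crit_match_disjoint (i : I) (k : ℕ) {x : Ch V}
    (hx1 : x ∈ critWOn (K i) m φ k) (hx2 : x ∈ matchWOn m (K i) k) : x = 0 := by
  obtain ⟨s, hs, t, ht, rfl⟩ := Submodule.mem_sup.mp hx2
  obtain ⟨y, hy, rfl⟩ := Submodule.mem_map.mp ht
  have hbsx : bdry V s = bdry V (s + bdry V y) := by
    rw [map_add, bdry_bdry, add_zero]
  have hs0 : s = 0 := by
    refine upspan_triangular hac
      (S := {σ | σ ∈ K i ∧ σ ∈ Mup m ∧ σ.card = k}) ?_ hs ?_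
    · rintro σ ⟨-, hup, -⟩
      exact ⟨hup, muM_nonempty hcx hKinf hMK hup.1⟩
    · rintro β₀ ⟨-, hup, hc⟩
      rw [hbsx]
      exact crit_eval_bdry hmono hcx hKinf hMK hac hh hresp hφ i k hx1 hup hc
  subst hs0
  have hy0 : y = 0 := by
    refine upspan_triangular hac
      (S := {σ | σ ∈ K i ∧ σ ∈ Mup m ∧ σ.card = k + 1}) ?_ hy ?_
    · rintro σ ⟨-, hup, -⟩
      exact ⟨hup, muM_nonempty hcx hKinf hMK hup.1⟩
    · rintro β₁ ⟨-, hup, hc⟩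
      have hμM : m.μ β₁ ∈ m.M := m.mem_M β₁ hup.1
      have hdn : Covers (m.μ (m.μ β₁)) (m.μ β₁) := by
        rw [m.invol β₁ hup.1]; exact hup.2
      have := crit_eval_down hmono hcx hKinf hMK hac hh hresp hφ i k hx1 hμM hdn
      rwa [zero_add] at this
  rw [hy0, map_zero, add_zero]

theorem match_cycle (hac : m.Acyclic) (hcx' : ∀ i, IsComplex (K i))
    (hKinf' : Kinf = ⋃ i, K i) (hMK' : m.M ⊆ Kinf) (i : I) (k : ℕ) {x : Ch V}
    (hx : x ∈ matchWOn m (K i) k) (hbx : bdry V x = 0) :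
    ∃ y ∈ upSpan m (K i) (k + 1), x = bdry V y := by
  obtain ⟨s, hs, t, ht, rfl⟩ := Submodule.mem_sup.mp hx
  obtain ⟨y, hy, rfl⟩ := Submodule.mem_map.mp ht
  have hbs : bdry V s = 0 := by
    have := hbx
    rwa [map_add, bdry_bdry, add_zero] at this
  have hs0 : s = 0 := by
    refine upspan_triangular hac
      (S := {σ | σ ∈ K i ∧ σ ∈ Mup m ∧ σ.card = k}) ?_ hs ?_
    · rintro σ ⟨-, hup, -⟩
      exact ⟨hup, muM_nonempty hcx' hKinf' hMK' hup.1⟩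
    · rintro β₀ ⟨-, -, -⟩
      rw [hbs]; rfl
  exact ⟨y, hy, by rw [hs0, zero_add]⟩

theorem upSpan_le_chain (hcx' : ∀ i, IsComplex (K i)) (i : I) (k : ℕ) :
    upSpan m (K i) k ≤ chainCard (K i) k := by
  apply Submodule.span_le.mpr
  rintro f ⟨σ, ⟨hσ, -, hc⟩, rfl⟩
  exact Submodule.subset_span ⟨σ, hσ, hc, rfl⟩

include hcx hKinf hMK in
theorem matchWOn_le_chain (i : I) (k : ℕ) :
    matchWOn m (K i) k ≤ chainCard (K i) k := by
  apply sup_le (upSpan_le_chain hcx i k)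
  rw [Submodule.map_le_iff_le_comap]
  apply Submodule.span_le.mpr
  rintro f ⟨β, ⟨hβ, hβup, hβc⟩, rfl⟩
  simp only [SetLike.mem_coe, Submodule.mem_comap]
  rw [bdry_single]
  by_cases h1 : β.card ≤ 1
  · rw [if_pos h1]; exact Submodule.zero_mem _
  · rw [if_neg h1]
    apply Submodule.sum_mem
    intro v hv
    have hsub : β.erase v ⊆ β := Finset.erase_subset _ _
    have hcc : (β.erase v).card = k := by
      have := Finset.card_erase_of_mem hv; omega
    have hne : (β.erase v).Nonempty := by
      rw [← Finset.card_pos, hcc]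
      have hμne := muM_nonempty hcx hKinf hMK hβup.1
      have := Finset.card_pos.mpr hμne
      have := hβup.2.2
      omega
    exact Submodule.subset_span ⟨β.erase v, (hcx i β hβ).2 _ hsub hne, hcc, rfl⟩

include hmono hcx hKinf hMK hac hh hresp hφ in
theorem crit_bd (i : I) (k : ℕ) {x : Ch V} (hx : x ∈ critWOn (K i) m φ (k + 1)) :
    bdry V x ∈ critWOn (K i) m φ k := by
  have hle : critWOn (K i) m φ (k + 1) ≤ Submodule.comap (bdry V) (critWOn (K i) m φ k) := by
    apply Submodule.span_le.mpr
    rintro f ⟨γ, hγ, hγc, hγM, rfl⟩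
    simp only [SetLike.mem_coe, Submodule.mem_comap]
    exact bdry_phi_crit hmono hcx hKinf hMK hac hh hresp hφ i hγ hγM hγc
  exact hle hx

theorem match_bd (i : I) (k : ℕ) {x : Ch V} (hx : x ∈ matchWOn m (K i) (k + 1)) :
    bdry V x ∈ matchWOn m (K i) k := by
  obtain ⟨s, hs, t, ht, rfl⟩ := Submodule.mem_sup.mp hx
  obtain ⟨y, hy, rfl⟩ := Submodule.mem_map.mp ht
  rw [map_add, bdry_bdry, add_zero]
  exact Submodule.mem_sup_right (Submodule.mem_map_of_mem hs)

include hmono hcx hKinf hMK hac hh hresp hφ in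
theorem chain_le_sup (i : I) (k : ℕ) :
    chainCard (K i) k ≤ critWOn (K i) m φ k ⊔ matchWOn m (K i) k := by
  classical
  have hcrit_case : ∀ σ, σ ∈ K i → σ ∉ m.M →
      Finsupp.single σ (1 : ZMod 2) ∈
        critWOn (K i) m φ σ.card ⊔ matchWOn m (K i) σ.card := by
    intro σ hσ hσM
    have hσinf : σ ∈ Kinf := Ki_sub_Kinf hKinf i hσ
    have h1 : φ σ ∈ critWOn (K i) m φ σ.card :=
      Submodule.subset_span ⟨σ, hσ, rfl, hσM, rfl⟩
    have h2 : φ σ - Finsupp.single σ (1 : ZMod 2) ∈ upSpan m (K i) σ.card := by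
      refine Submodule.span_mono ?_
        (phi_decomp hmono hcx hKinf hMK hac hh hresp hφ σ hσinf)
      rintro f ⟨σ', ⟨hup, hc, hf⟩, rfl⟩
      exact ⟨σ', ⟨hf i hσ, hup, hc⟩, rfl⟩
    have heq : Finsupp.single σ (1 : ZMod 2) = φ σ - (φ σ - Finsupp.single σ 1) :=
      (sub_sub_cancel _ _).symm
    rw [heq]
    exact Submodule.sub_mem _ (Submodule.mem_sup_left h1)
      (Submodule.mem_sup_right (Submodule.mem_sup_left h2))
  have hdown : ∀ β, β ∈ Mup m → β ∈ K i →
      Finsupp.single (m.μ β) (1 : ZMod 2) ∈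
        critWOn (K i) m φ (m.μ β).card ⊔ matchWOn m (K i) (m.μ β).card := by
    intro β
    induction β using (edge_wf hac).induction with
    | _ β ih =>
    intro hβup hβi
    have hμM : m.μ β ∈ m.M := m.mem_M β hβup.1
    have hμne : (m.μ β).Nonempty := muM_nonempty hcx hKinf hMK hβup.1
    have hμcard : β.card = (m.μ β).card + 1 := hβup.2.2
    have hμpos : 0 < (m.μ β).card := Finset.card_pos.mpr hμne
    have hβcard2 : ¬ (β.card ≤ 1) := by omega
    obtain ⟨v₀, hv₀β, hv₀e, hv₀u⟩ := covers_erase_unique hβup.2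
    have hsplit : Finsupp.single (m.μ β) (1 : ZMod 2) =
        bdry V (Finsupp.single β 1) -
          ∑ v ∈ β.erase v₀, Finsupp.single (β.erase v) (1 : ZMod 2) := by
      rw [bdry_single, if_neg hβcard2, ← Finset.add_sum_erase β _ hv₀β, hv₀e,
        add_sub_cancel_right]
    rw [hsplit]
    apply Submodule.sub_mem
    · apply Submodule.mem_sup_right
      apply Submodule.mem_sup_right
      exact Submodule.mem_map_of_mem
        (Submodule.subset_span ⟨β, ⟨hβi, hβup, by omega⟩, rfl⟩)
    · apply Submodule.sum_mem
      intro v hv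
      have hvβ : v ∈ β := Finset.mem_of_mem_erase hv
      have hτsub : β.erase v ⊆ β := Finset.erase_subset _ _
      have hτc0 : (β.erase v).card = β.card - 1 := Finset.card_erase_of_mem hvβ
      have hτcard : (β.erase v).card = (m.μ β).card := by omega
      have hτne : (β.erase v).Nonempty := by rw [← Finset.card_pos]; omega
      have hτi : β.erase v ∈ K i := (hcx i β hβi).2 _ hτsub hτne
      have hτnμ : β.erase v ≠ m.μ β := fun he => (Finset.mem_erase.mp hv).1 (hv₀u v hvβ he)
      by_cases hτM : β.erase v ∈ m.M
      · rcases m.matched _ hτM with hdn | hup2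
        · have hβ'' : m.μ (β.erase v) ∈ Mup m :=
            ⟨m.mem_M _ hτM, by rw [m.invol _ hτM]; exact hdn⟩
          have hβ''i : m.μ (β.erase v) ∈ K i :=
            mclosed hmono hcx hKinf hMK hh hresp hτM hτi
          have hE : IsEdge m β (m.μ (β.erase v)) := by
            refine ⟨?_, m.mem_M _ hτM, hβ''.2, ?_⟩
            · intro he
              apply hτnμ
              rw [← m.invol _ hτM, he]
            · rw [m.invol _ hτM]
              exact ⟨hτsub, by omega⟩
          have hres := ih (m.μ (β.erase v)) hE hβ'' hβ''i
          rw [m.invol _ hτM] at hres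
          exact hτcard ▸ hres
        · apply Submodule.mem_sup_right
          apply Submodule.mem_sup_left
          exact Submodule.subset_span ⟨β.erase v, ⟨hτi, ⟨hτM, hup2⟩, hτcard⟩, rfl⟩
      · exact hτcard ▸ hcrit_case (β.erase v) hτi hτM
  apply Submodule.span_le.mpr
  rintro f ⟨σ, hσ, hcard, rfl⟩
  by_cases hσM : σ ∈ m.M
  · rcases m.matched σ hσM with hdn | hup
    · have h1 : m.μ σ ∈ Mup m := ⟨m.mem_M σ hσM, by rw [m.invol σ hσM]; exact hdn⟩
      have h2 : m.μ σ ∈ K i := mclosed hmono hcx hKinf hMK hh hresp hσM hσ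
      have hres := hdown (m.μ σ) h1 h2
      rw [m.invol σ hσM] at hres
      exact hcard ▸ hres
    · exact hcard ▸ Submodule.mem_sup_right (Submodule.mem_sup_left
        (Submodule.subset_span ⟨σ, ⟨hσ, ⟨hσM, hup⟩, rfl⟩, rfl⟩))
  · exact hcard ▸ hcrit_case σ hσ hσM
end Main

/-- Let `(K i)_{i ∈ I}` be a filtration of finite simplicial complexes
over a totally ordered index set, with finite union `K∞`, and let `μ` be an acyclic
partial matching on `K∞` that respects the filtration (`h (μ σ) = h σ` where `h σ` is the
smallest index at which `σ` appears). Then for every degree `q ≥ 0`, the maps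
`θ_i : H_q(Crit_*(K i, μ)) → H_q(K i)` induced by the inclusion of chains are
isomorphisms, and they commute with the maps induced by the inclusions
`K i ⊆ K j` (`i < j`) on both chain complexes. -/
theorem crit_persistent_iso {V : Type*} [Fintype V] [DecidableEq V]
    {I : Type*} [LinearOrder I]
    (K : I → Set (Finset V)) (hmono : ∀ i j, i ≤ j → K i ⊆ K j)
    (hcx : ∀ i, IsComplex (K i))
    (Kinf : Set (Finset V)) (hKinf : Kinf = ⋃ i, K i)
    (m : PartialMatching V) (hMK : m.M ⊆ Kinf) (hac : m.Acyclic)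
    (h : Finset V → I)
    (hh : ∀ σ ∈ Kinf, σ ∈ K (h σ) ∧ ∀ i, σ ∈ K i → h σ ≤ i)
    (hresp : ∀ σ ∈ m.M, h (m.μ σ) = h σ)
    (φ : Finset V → Ch V) (hφ : IsClosure Kinf m φ)
    (hincl : ∀ i k, critWOn (K i) m φ k ≤ chainCard (K i) k)
    (q : ℕ) :
    (∀ i, Function.Bijective
        (homolMap (critWOn (K i) m φ) (chainCard (K i)) (hincl i) (q + 1))) ∧
    (∀ i j, ∀ hij : i < j,
      LinearMap.comp
          (homolMap (chainCard (K i)) (chainCard (K j))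
            (fun k => chainCard_mono (hmono i j hij.le) k) (q + 1))
          (homolMap (critWOn (K i) m φ) (chainCard (K i)) (hincl i) (q + 1)) =
        LinearMap.comp
          (homolMap (critWOn (K j) m φ) (chainCard (K j)) (hincl j) (q + 1))
          (homolMap (critWOn (K i) m φ) (critWOn (K j) m φ)
            (fun k => critWOn_mono (hmono i j hij.le) m φ k) (q + 1))) := by
  classical
  constructor
  · intro i
    constructor
    · -- injectivity
      apply LinearMap.ker_eq_bot.mp
      rw [Submodule.eq_bot_iff]
      intro x hx
      obtain ⟨a, rfl⟩ := Submodule.Quotient.mk_surjective _ x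
      rw [LinearMap.mem_ker, homolMap, Submodule.mapQ_apply,
        Submodule.Quotient.mk_eq_zero] at hx
      simp only [Submodule.mem_comap, Submodule.subtype_apply, Submodule.coe_inclusion] at hx
      obtain ⟨c, hc, hbc⟩ := Submodule.mem_map.mp hx
      obtain ⟨a', ha', w, hw, rfl⟩ := Submodule.mem_sup.mp
        (chain_le_sup hmono hcx hKinf hMK hac hh hresp hφ i (q + 1 + 1) hc)
      rw [map_add] at hbc
      have hdiff : (a : Ch V) - bdry V a' = bdry V w := by rw [← show bdry V a' + bdry V w = (a : Ch V) from hbc]; abel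
      have hba' : bdry V a' ∈ critWOn (K i) m φ (q + 1) :=
        crit_bd hmono hcx hKinf hMK hac hh hresp hφ i (q + 1) ha'
      have ha1 : (a : Ch V) ∈ critWOn (K i) m φ (q + 1) := a.2.1
      have hzero : (a : Ch V) - bdry V a' = 0 :=
        crit_match_disjoint hmono hcx hKinf hMK hac hh hresp hφ i (q + 1)
          (Submodule.sub_mem _ ha1 hba') (hdiff ▸ match_bd i (q + 1) hw)
      have haeq : (a : Ch V) = bdry V a' := by
        have := sub_eq_zero.mp hzero; exact this
      rw [Submodule.Quotient.mk_eq_zero]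
      simp only [Submodule.mem_comap, Submodule.subtype_apply]
      exact ⟨a', ha', haeq.symm⟩
    · -- surjectivity
      intro z'
      obtain ⟨z, rfl⟩ := Submodule.Quotient.mk_surjective _ z'
      have hz1 : (z : Ch V) ∈ chainCard (K i) (q + 1) := z.2.1
      have hz2 : bdry V (z : Ch V) = 0 := z.2.2
      obtain ⟨a, ha, w, hw, hzsum⟩ := Submodule.mem_sup.mp
        (chain_le_sup hmono hcx hKinf hMK hac hh hresp hφ i (q + 1) hz1)
      have hsum : bdry V a + bdry V w = 0 := by
        rw [← map_add, hzsum, hz2]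
      have hba : bdry V a ∈ critWOn (K i) m φ q :=
        crit_bd hmono hcx hKinf hMK hac hh hresp hφ i q ha
      have hbam : bdry V a ∈ matchWOn m (K i) q := by
        have hneg : bdry V a = - bdry V w := eq_neg_of_add_eq_zero_left hsum
        rw [hneg]
        exact Submodule.neg_mem _ (match_bd i q hw)
      have hba0 : bdry V a = 0 :=
        crit_match_disjoint hmono hcx hKinf hMK hac hh hresp hφ i q hba hbam
      have hbw0 : bdry V w = 0 := by rwa [hba0, zero_add] at hsum
      obtain ⟨y, hy, hwy⟩ := match_cycle hac hcx hKinf hMK i (q + 1) hw hbw0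
      have hamem : a ∈ cyclesOf (critWOn (K i) m φ) (q + 1) :=
        Submodule.mem_inf.mpr ⟨ha, LinearMap.mem_ker.mpr hba0⟩
      refine ⟨Submodule.Quotient.mk ⟨a, hamem⟩, ?_⟩
      rw [homolMap, Submodule.mapQ_apply, Submodule.Quotient.eq]
      simp only [Submodule.mem_comap, Submodule.subtype_apply, Submodule.coe_sub,
        Submodule.coe_inclusion]
      have hdiff : (a : Ch V) - (z : Ch V) = -(bdry V y) := by
        rw [← hzsum, hwy]; abel
      change a - (z : Ch V) ∈ bdriesOf (chainCard (K i)) (q + 1); rw [hdiff]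
      exact Submodule.neg_mem _ ⟨y, upSpan_le_chain hcx i (q + 1 + 1) hy, rfl⟩
  · -- functoriality
    intro i j hij
    apply LinearMap.ext
    intro x
    obtain ⟨a, rfl⟩ := Submodule.Quotient.mk_surjective _ x
    simp only [LinearMap.comp_apply, homolMap, Submodule.mapQ_apply]
    exact congrArg _ (Subtype.ext rfl)
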